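/- Let ε ∈ [0,1] and α ∈ [0,1], and define the density evolution sequence by x_0 = ε and x_{ℓ+1} = f(x_ℓ, ε, α). Then the sequence (x_ℓ) is monotone nonincreasing, it converges to a limit L ∈ [0, ε], L is a fixed point of x ↦ f(x, ε, α), and every fixed point y ∈ [0, ε] satisfies y ≤ L. -/

import Mathlib

/-- Variable-node degree distribution polynomial `λ(y) = Σ_{d=2}^{Dv} λ_d y^(d-1)`. -/
noncomputable def degPoly (D : ℕ) (c : ℕ → ℝ) (y : ℝ) : ℝ :=
  ∑ d ∈ Finset.Icc 2 D, c d * y ^ (d - 1)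

/-- Density evolution map of the peeling decoder with missing connections for the
irregular LDPC ensemble with degree distributions `λ` and `ρ` over the BEC. -/
noncomputable def peelDEirr (Dv Dc : ℕ) (lam rho : ℕ → ℝ) (x ε α : ℝ) : ℝ :=
  ε * degPoly Dv lam (α + (1 - α) * (1 - degPoly Dc rho ((1 - x) * (1 - α))))

lemma degPoly_nonneg (D : ℕ) (c : ℕ → ℝ) (hc : ∀ d, 0 ≤ c d) {y : ℝ} (hy : 0 ≤ y) :
    0 ≤ degPoly D c y :=
  Finset.sum_nonneg fun d _ => mul_nonneg (hc d) (pow_nonneg hy _)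

lemma degPoly_mono (D : ℕ) (c : ℕ → ℝ) (hc : ∀ d, 0 ≤ c d) {a b : ℝ}
    (ha : 0 ≤ a) (hab : a ≤ b) : degPoly D c a ≤ degPoly D c b :=
  Finset.sum_le_sum fun d _ =>
    mul_le_mul_of_nonneg_left (pow_le_pow_left₀ ha hab _) (hc d)

lemma degPoly_le_one (D : ℕ) (c : ℕ → ℝ) (hc : ∀ d, 0 ≤ c d)
    (hc1 : ∑ d ∈ Finset.Icc 2 D, c d = 1) {y : ℝ} (hy0 : 0 ≤ y) (hy1 : y ≤ 1) :
    degPoly D c y ≤ 1 := by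
  calc degPoly D c y ≤ ∑ d ∈ Finset.Icc 2 D, c d := by
        apply Finset.sum_le_sum
        intro d _
        nlinarith [pow_le_one₀ (n := d - 1) hy0 hy1, hc d, pow_nonneg hy0 (d - 1)]
    _ = 1 := hc1

/-- For `ε, α ∈ [0,1]`, the density evolution sequence `x₀ = ε`,
`x_{ℓ+1} = f(x_ℓ,ε,α)` of the irregular peeling decoder with missing
connections is monotone nonincreasing and converges to a fixed point
`L ∈ [0,ε]` of `x ↦ f(x,ε,α)` which dominates every fixed point in `[0,ε]`. -/
theorem peelDEirr_sequence_converges_to_largest_fixedPoint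
    (Dv Dc : ℕ) (hDv : 2 ≤ Dv) (hDc : 2 ≤ Dc) (lam rho : ℕ → ℝ)
    (hlam : ∀ d, 0 ≤ lam d) (hrho : ∀ d, 0 ≤ rho d)
    (hlam1 : ∑ d ∈ Finset.Icc 2 Dv, lam d = 1)
    (hrho1 : ∑ d ∈ Finset.Icc 2 Dc, rho d = 1)
    (ε α : ℝ) (hε : ε ∈ Set.Icc (0 : ℝ) 1) (hα : α ∈ Set.Icc (0 : ℝ) 1)
    (xs : ℕ → ℝ) (hxs0 : xs 0 = ε)
    (hxs : ∀ ℓ : ℕ, xs (ℓ + 1) = peelDEirr Dv Dc lam rho (xs ℓ) ε α) :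
    Antitone xs ∧
    ∃ L : ℝ, L ∈ Set.Icc (0 : ℝ) ε ∧
      Filter.Tendsto xs Filter.atTop (nhds L) ∧
      L = peelDEirr Dv Dc lam rho L ε α ∧
      ∀ y ∈ Set.Icc (0 : ℝ) ε, y = peelDEirr Dv Dc lam rho y ε α → y ≤ L := by
  obtain ⟨hε0, hε1⟩ := hε
  obtain ⟨hα0, hα1⟩ := hα
  have hrange : ∀ x : ℝ, 0 ≤ x → x ≤ 1 →
      0 ≤ peelDEirr Dv Dc lam rho x ε α ∧ peelDEirr Dv Dc lam rho x ε α ≤ ε := by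
    intro x hx0 hx1
    have hv0 : 0 ≤ (1 - x) * (1 - α) := mul_nonneg (by linarith) (by linarith)
    have hv1 : (1 - x) * (1 - α) ≤ 1 := by nlinarith
    have hρ0 := degPoly_nonneg Dc rho hrho hv0
    have hρ1 := degPoly_le_one Dc rho hrho hrho1 hv0 hv1
    have harg0 : 0 ≤ α + (1 - α) * (1 - degPoly Dc rho ((1 - x) * (1 - α))) := by nlinarith
    have harg1 : α + (1 - α) * (1 - degPoly Dc rho ((1 - x) * (1 - α))) ≤ 1 := by nlinarith
    have hlv0 := degPoly_nonneg Dv lam hlam harg0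
    have hlv1 := degPoly_le_one Dv lam hlam hlam1 harg0 harg1
    constructor
    · exact mul_nonneg hε0 hlv0
    · calc peelDEirr Dv Dc lam rho x ε α
          = ε * degPoly Dv lam (α + (1 - α) * (1 - degPoly Dc rho ((1 - x) * (1 - α)))) := rfl
        _ ≤ ε * 1 := mul_le_mul_of_nonneg_left hlv1 hε0
        _ = ε := mul_one ε
  have hmono : ∀ a b : ℝ, 0 ≤ a → a ≤ b → b ≤ 1 →
      peelDEirr Dv Dc lam rho a ε α ≤ peelDEirr Dv Dc lam rho b ε α := by
    intro a b ha0 hab hb1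
    have hu0 : 0 ≤ (1 - b) * (1 - α) := mul_nonneg (by linarith) (by linarith)
    have huv : (1 - b) * (1 - α) ≤ (1 - a) * (1 - α) := by nlinarith
    have hρ := degPoly_mono Dc rho hrho hu0 huv
    have hv1 : (1 - a) * (1 - α) ≤ 1 := by nlinarith
    have hρv1 := degPoly_le_one Dc rho hrho hrho1 (le_trans hu0 huv) hv1
    have hargv0 : 0 ≤ α + (1 - α) * (1 - degPoly Dc rho ((1 - a) * (1 - α))) := by nlinarith
    have harg : α + (1 - α) * (1 - degPoly Dc rho ((1 - a) * (1 - α)))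
        ≤ α + (1 - α) * (1 - degPoly Dc rho ((1 - b) * (1 - α))) := by nlinarith
    exact mul_le_mul_of_nonneg_left (degPoly_mono Dv lam hlam hargv0 harg) hε0
  have hbox : ∀ n, 0 ≤ xs n ∧ xs n ≤ ε := by
    intro n
    induction n with
    | zero => rw [hxs0]; exact ⟨hε0, le_refl ε⟩
    | succ n ih =>
      rw [hxs n]
      exact hrange (xs n) ih.1 (le_trans ih.2 hε1)
  have hdec : ∀ n, xs (n + 1) ≤ xs n := by
    intro n
    induction n with
    | zero =>
      rw [hxs 0, hxs0]
      exact (hrange ε hε0 hε1).2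
    | succ n ih =>
      calc xs (n + 2) = peelDEirr Dv Dc lam rho (xs (n + 1)) ε α := hxs (n + 1)
        _ ≤ peelDEirr Dv Dc lam rho (xs n) ε α :=
            hmono _ _ (hbox (n + 1)).1 ih (le_trans (hbox n).2 hε1)
        _ = xs (n + 1) := (hxs n).symm
  have hanti : Antitone xs := antitone_nat_of_succ_le hdec
  have hbdd : BddBelow (Set.range xs) := ⟨0, by rintro z ⟨n, rfl⟩; exact (hbox n).1⟩
  set L := ⨅ n, xs n with hL
  have htend : Filter.Tendsto xs Filter.atTop (nhds L) :=
    tendsto_atTop_ciInf hanti hbdd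
  have hL0 : 0 ≤ L := le_ciInf fun n => (hbox n).1
  have hLε : L ≤ ε := by
    have := ciInf_le hbdd 0
    rw [hxs0] at this; exact this
  have hcontL : Continuous (degPoly Dv lam) :=
    continuous_finset_sum _ fun d _ => continuous_const.mul (continuous_pow _)
  have hcontR : Continuous (degPoly Dc rho) :=
    continuous_finset_sum _ fun d _ => continuous_const.mul (continuous_pow _)
  have hcontg : Continuous (fun x => peelDEirr Dv Dc lam rho x ε α) := by
    apply continuous_const.mul
    apply hcontL.comp
    apply continuous_const.add
    apply continuous_const.mul
    apply continuous_const.sub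
    apply hcontR.comp
    exact (continuous_const.sub continuous_id).mul continuous_const
  have hfix : L = peelDEirr Dv Dc lam rho L ε α := by
    have h1 : Filter.Tendsto (fun n => xs (n + 1)) Filter.atTop (nhds L) :=
      htend.comp (Filter.tendsto_add_atTop_nat 1)
    have h2 : Filter.Tendsto (fun n => peelDEirr Dv Dc lam rho (xs n) ε α)
        Filter.atTop (nhds (peelDEirr Dv Dc lam rho L ε α)) :=
      (hcontg.tendsto L).comp htend
    have he : (fun n => xs (n + 1)) = fun n => peelDEirr Dv Dc lam rho (xs n) ε α :=
      funext fun n => hxs n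
    rw [he] at h1
    exact tendsto_nhds_unique h1 h2
  refine ⟨hanti, L, ⟨hL0, hLε⟩, htend, hfix, ?_⟩
  intro y hy hyfix
  have hyn : ∀ n, y ≤ xs n := by
    intro n
    induction n with
    | zero => rw [hxs0]; exact hy.2
    | succ n ih =>
      rw [hxs n, hyfix]
      exact hmono y (xs n) hy.1 ih (le_trans (hbox n).2 hε1)
  exact le_ciInf hyn
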